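/- (Maximum principle for the time-fractional Burgers equation.) Let 0 < α < 1, ν > 0, L > 0, T > 0, and let u be continuous on [0,L]×[0,T), twice continuously differentiable in x on (0,L) and continuously differentiable in t on (0,T) such that the Caputo derivative ∂^α_{+0,t}u(x,t) exists, and suppose u satisfies ∂^α_{+0,t}u + u u_x = ν u_{xx} on (0,L)×(0,T) together with u(x,0) = u₀(x). Then for all (x,t) ∈ [0,L]×[0,T), u(x,t) ≤ M, where M is the supremum over the set consisting of the values u(0,s) and u(L,s) for s ∈ [0,T) and u₀(y) for y ∈ [0,L]. -/

import Mathlib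

open Set MeasureTheory Filter intervalIntegral

/-- Caputo fractional derivative of order α at base point 0 (in one real variable). -/
noncomputable def caputo (α : ℝ) (f : ℝ → ℝ) (t : ℝ) : ℝ :=
  (1 / Real.Gamma (1 - α)) * ∫ s in (0:ℝ)..t, (t - s) ^ (-α) * deriv f s

/-- Partial derivative in the first (spatial) variable. -/
noncomputable def pdX (u : ℝ → ℝ → ℝ) : ℝ → ℝ → ℝ := fun x t => deriv (fun y => u y t) x

/-- Partial derivative in the second (time) variable. -/
noncomputable def pdT (u : ℝ → ℝ → ℝ) : ℝ → ℝ → ℝ := fun x t => deriv (fun s => u x s) t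

/-- Caputo fractional derivative in the time variable (x fixed). -/
noncomputable def capT (α : ℝ) (u : ℝ → ℝ → ℝ) (x t : ℝ) : ℝ := caputo α (fun s => u x s) t

/-- u belongs to C^{1,n}_{t,x}([0,T] x [0,L]): the spatial derivatives up to order n and
their first time derivatives exist and are continuous on the closed rectangle. -/
def CReg (n : ℕ) (u : ℝ → ℝ → ℝ) (L T : ℝ) : Prop :=
  (∀ k ≤ n, ContinuousOn (fun p : ℝ × ℝ => (pdX^[k] u) p.1 p.2) (Icc 0 L ×ˢ Icc 0 T)) ∧
  (∀ k ≤ n, ContinuousOn (fun p : ℝ × ℝ => pdT (pdX^[k] u) p.1 p.2) (Icc 0 L ×ˢ Icc 0 T)) ∧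
  (∀ k < n, ∀ x ∈ Icc (0:ℝ) L, ∀ t ∈ Icc (0:ℝ) T, DifferentiableAt ℝ (fun y => (pdX^[k] u) y t) x) ∧
  (∀ k ≤ n, ∀ x ∈ Icc (0:ℝ) L, ∀ t ∈ Icc (0:ℝ) T, DifferentiableAt ℝ (fun s => (pdX^[k] u) x s) t)

/-- φ belongs to C^n([0,L]). -/
def Csp (n : ℕ) (φ : ℝ → ℝ) (L : ℝ) : Prop :=
  (∀ k < n, ∀ x ∈ Icc (0:ℝ) L, DifferentiableAt ℝ (deriv^[k] φ) x) ∧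
  ContinuousOn (deriv^[n] φ) (Icc 0 L)


/-- Maximum principle for the time-fractional Burgers equation. -/
lemma second_deriv_nonpos_at_max {f : ℝ → ℝ} {a b x₀ : ℝ}
    (hd : ∀ x ∈ Ioo a b, DifferentiableAt ℝ f x)
    (hd' : ∀ x ∈ Ioo a b, DifferentiableAt ℝ (deriv f) x)
    (hc : ContinuousAt (deriv (deriv f)) x₀)
    (hmax : ∀ x ∈ Icc a b, f x ≤ f x₀)
    (hx₀ : x₀ ∈ Ioo a b) :
    deriv (deriv f) x₀ ≤ 0 := by
  by_contra hpos
  push_neg at hpos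
  -- deriv f x₀ = 0
  have hloc : IsLocalMax f x₀ := by
    have h1 : Icc a b ∈ nhds x₀ := Icc_mem_nhds hx₀.1 hx₀.2
    exact Filter.eventually_of_mem h1 (fun x hx => hmax x hx)
  have hderiv0 : deriv f x₀ = 0 := hloc.deriv_eq_zero
  -- find δ > 0 with Icc x₀ (x₀+δ) ⊆ Ioo a b and deriv (deriv f) > 0 there
  have hev : ∀ᶠ x in nhds x₀, 0 < deriv (deriv f) x ∧ x ∈ Ioo a b :=
    (continuousAt_const.eventually_lt hc hpos).and (Ioo_mem_nhds hx₀.1 hx₀.2)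
  obtain ⟨δ, hδpos, hδ⟩ := Metric.eventually_nhds_iff_ball.1 hev
  set c := x₀ + δ/2 with hc_def
  have hsub : Icc x₀ c ⊆ Metric.ball x₀ δ := by
    intro x hx
    obtain ⟨h1, h2⟩ := hx
    rw [Metric.mem_ball, Real.dist_eq, abs_lt]
    rw [hc_def] at h2
    constructor <;> linarith
  have hsub' : Icc x₀ c ⊆ Ioo a b := fun x hx => (hδ x (hsub hx)).2
  have hxc : x₀ < c := by simp [hc_def]; linarith
  -- deriv f strictly monotone on Icc x₀ c
  have hmono1 : StrictMonoOn (deriv f) (Icc x₀ c) := by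
    apply strictMonoOn_of_deriv_pos (convex_Icc _ _)
    · exact fun x hx => ((hd' x (hsub' hx)).continuousAt).continuousWithinAt
    · intro x hx
      rw [interior_Icc] at hx
      exact (hδ x (hsub ⟨le_of_lt hx.1, le_of_lt hx.2⟩)).1
  have hdpos : ∀ x ∈ Ioo x₀ c, 0 < deriv f x := by
    intro x hx
    have := hmono1 (left_mem_Icc.2 hxc.le) ⟨hx.1.le, hx.2.le⟩ hx.1
    rwa [hderiv0] at this
  have hmono2 : StrictMonoOn f (Icc x₀ c) := by
    apply strictMonoOn_of_deriv_pos (convex_Icc _ _)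
    · exact fun x hx => ((hd x (hsub' hx)).continuousAt).continuousWithinAt
    · intro x hx
      rw [interior_Icc] at hx
      exact hdpos x hx
  have : f x₀ < f c := hmono2 (left_mem_Icc.2 hxc.le) (right_mem_Icc.2 hxc.le) hxc
  have hcmem : c ∈ Icc a b := Ioo_subset_Icc_self (hsub' (right_mem_Icc.2 hxc.le))
  exact absurd (hmax c hcmem) (not_le.2 this)

lemma caputo_nonneg_at_max {α t₀ : ℝ} (hα : 0 < α) (hα1 : α < 1) (ht₀ : 0 < t₀)
    {f : ℝ → ℝ}
    (hfd : ∀ s ∈ Ioc (0:ℝ) t₀, DifferentiableAt ℝ f s)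
    (hfd' : ContinuousOn (deriv f) (Ioo 0 t₀))
    (hint : IntervalIntegrable (fun s => (t₀ - s) ^ (-α) * deriv f s) volume 0 t₀)
    (hmax : ∀ s ∈ Icc (0:ℝ) t₀, f s ≤ f t₀) :
    0 ≤ ∫ s in (0:ℝ)..t₀, (t₀ - s) ^ (-α) * deriv f s := by
  set g : ℝ → ℝ := fun s => (t₀ - s) ^ (-α) * deriv f s with hg
  set F : ℝ → ℝ := fun y => ∫ s in (0:ℝ)..y, g s with hF
  set h : ℝ → ℝ := fun s => (f s - f t₀) * (t₀ - s) ^ (-α) with hh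
  -- continuity of the primitive
  have hFc : ContinuousOn F (Icc 0 t₀) := by
    have := continuousOn_primitive_interval' hint (left_mem_uIcc (a := (0:ℝ)) (b := t₀))
    rwa [uIcc_of_le ht₀.le] at this
  -- Step 1 : ∀ b ∈ Ioo 0 t₀, h b ≤ F b
  have step1 : ∀ b ∈ Ioo (0:ℝ) t₀, h b ≤ F b := by
    intro b hb
    obtain ⟨hb0, hbt⟩ := hb
    -- fixed δ estimate
    have key : ∀ δ ∈ Ioo (0:ℝ) b, h b ≤ F b - F δ := by
      intro δ hδ
      obtain ⟨hδ0, hδb⟩ := hδ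
      have hsub : Icc δ b ⊆ Ioo (0:ℝ) t₀ := fun s hs => ⟨lt_of_lt_of_le hδ0 hs.1, lt_of_le_of_lt hs.2 hbt⟩
      -- derivative of h on [δ, b]
      have hDeriv : ∀ s ∈ uIcc δ b, HasDerivAt h
          (g s + α * ((f s - f t₀) * (t₀ - s) ^ (-α - 1))) s := by
        intro s hs
        rw [uIcc_of_le hδb.le] at hs
        have hs' := hsub hs
        have hts : 0 < t₀ - s := by linarith [hs'.2]
        have h1 : HasDerivAt f (deriv f s) s :=
          (hfd s ⟨hs'.1, hs'.2.le⟩).hasDerivAt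
        have h2 : HasDerivAt (fun s => (t₀ - s) ^ (-α)) (α * (t₀ - s) ^ (-α - 1)) s := by
          have hq : HasDerivAt (fun y : ℝ => y ^ (-α)) (-α * (t₀ - s) ^ (-α - 1)) (t₀ - s) :=
            Real.hasDerivAt_rpow_const (Or.inl (ne_of_gt hts))
          have hi : HasDerivAt (fun s : ℝ => t₀ - s) (-1) s := by
            simpa using (hasDerivAt_id s).const_sub t₀
          have := hq.comp s hi
          exact this.congr_deriv (by ring)
        have h3 := ((h1.sub_const (f t₀)).mul h2)
        exact h3.congr_deriv (by simp only [hg]; ring)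
      have hcont2 : ContinuousOn (fun s => α * ((f s - f t₀) * (t₀ - s) ^ (-α - 1))) (Icc δ b) := by
        apply ContinuousOn.mul continuousOn_const
        apply ContinuousOn.mul
        · apply ContinuousOn.sub _ continuousOn_const
          exact fun s hs => ((hfd s ⟨(hsub hs).1, (hsub hs).2.le⟩).continuousAt).continuousWithinAt
        · apply ContinuousOn.rpow_const
          · exact continuousOn_const.sub continuousOn_id
          · intro s hs
            exact Or.inl (ne_of_gt (by linarith [(hsub hs).2]))
      have hcontg : ContinuousOn g (Icc δ b) := by
        apply ContinuousOn.mul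
        · apply ContinuousOn.rpow_const
          · exact continuousOn_const.sub continuousOn_id
          · intro s hs
            exact Or.inl (ne_of_gt (by linarith [(hsub hs).2]))
        · exact hfd'.mono hsub
      have hIg : IntervalIntegrable g volume δ b := by
        apply ContinuousOn.intervalIntegrable
        rwa [uIcc_of_le hδb.le]
      have hI2 : IntervalIntegrable (fun s => α * ((f s - f t₀) * (t₀ - s) ^ (-α - 1))) volume δ b := by
        apply ContinuousOn.intervalIntegrable
        rwa [uIcc_of_le hδb.le]
      have hIBP := integral_eq_sub_of_hasDerivAt hDeriv (hIg.add hI2)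
      rw [integral_add hIg hI2] at hIBP
      -- second integral is ≤ 0
      have hneg : (∫ s in δ..b, α * ((f s - f t₀) * (t₀ - s) ^ (-α - 1))) ≤ 0 := by
        have hnn : 0 ≤ ∫ s in δ..b, -(α * ((f s - f t₀) * (t₀ - s) ^ (-α - 1))) := by
          apply integral_nonneg hδb.le
          intro s hs
          have hfs : f s - f t₀ ≤ 0 := by
            have := hmax s ⟨le_trans hδ0.le hs.1, le_trans hs.2 hbt.le⟩
            linarith
          have h0 : (0:ℝ) ≤ (t₀ - s) ^ (-α - 1) := Real.rpow_nonneg (by linarith [(hsub hs).2.le]) _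
          have hm := mul_nonneg (neg_nonneg.2 hfs) h0
          nlinarith
        rw [intervalIntegral.integral_neg] at hnn
        linarith
      -- h δ ≤ 0
      have hhδ : h δ ≤ 0 := by
        have hfs : f δ - f t₀ ≤ 0 := by
          have := hmax δ ⟨hδ0.le, by linarith⟩
          linarith
        have h0 : (0:ℝ) ≤ (t₀ - δ) ^ (-α) := Real.rpow_nonneg (by linarith) _
        simp only [hh]
        nlinarith
      -- F b - F δ = ∫ δ..b g
      have hsplit : F δ + (∫ s in δ..b, g s) = F b := by
        apply integral_add_adjacent_intervals
        · exact hint.mono_set (by rw [uIcc_of_le hδ0.le, uIcc_of_le ht₀.le]; exact Icc_subset_Icc le_rfl (by linarith))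
        · exact hIg
      have : h b - h δ = (∫ s in δ..b, g s) + ∫ s in δ..b, α * ((f s - f t₀) * (t₀ - s) ^ (-α - 1)) := hIBP.symm
      have : h b ≤ ∫ s in δ..b, g s := by linarith
      linarith
    -- let δ → 0⁺
    have hne : (nhdsWithin (0:ℝ) (Ioo 0 b)).NeBot := by
      apply mem_closure_iff_nhdsWithin_neBot.1
      rw [closure_Ioo (ne_of_lt hb0)]
      exact left_mem_Icc.2 hb0.le
    have hFδ : Tendsto F (nhdsWithin (0:ℝ) (Ioo 0 b)) (nhds 0) := by
      have h0mem : (0:ℝ) ∈ Icc (0:ℝ) t₀ := left_mem_Icc.2 ht₀.le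
      have := (hFc 0 h0mem).mono (Ioo_subset_Icc_self.trans (Icc_subset_Icc le_rfl hbt.le))
      have hF0 : F 0 = 0 := integral_same
      rw [ContinuousWithinAt, hF0] at this
      exact this
    have hT : Tendsto (fun δ => F b - F δ) (nhdsWithin (0:ℝ) (Ioo 0 b)) (nhds (F b)) := by
      have hcst : Tendsto (fun _ : ℝ => F b) (nhdsWithin (0:ℝ) (Ioo 0 b)) (nhds (F b)) :=
        tendsto_const_nhds
      simpa using hcst.sub hFδ
    exact ge_of_tendsto hT (eventually_nhdsWithin_of_forall key)
  -- Step 2 : limits as b → t₀⁻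
  have hne : (nhdsWithin t₀ (Ioo (0:ℝ) t₀)).NeBot := by
    apply mem_closure_iff_nhdsWithin_neBot.1
    rw [closure_Ioo (ne_of_lt ht₀)]
    exact right_mem_Icc.2 ht₀.le
  have hFt : Tendsto F (nhdsWithin t₀ (Ioo (0:ℝ) t₀)) (nhds (F t₀)) :=
    (hFc t₀ (right_mem_Icc.2 ht₀.le)).mono Ioo_subset_Icc_self
  have hht : Tendsto h (nhdsWithin t₀ (Ioo (0:ℝ) t₀)) (nhds 0) := by
    have hslope : Tendsto (slope f t₀) (nhdsWithin t₀ {t₀}ᶜ) (nhds (deriv f t₀)) :=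
      hasDerivAt_iff_tendsto_slope.1 (hfd t₀ (right_mem_Ioc.2 ht₀)).hasDerivAt
    have hmono : nhdsWithin t₀ (Ioo (0:ℝ) t₀) ≤ nhdsWithin t₀ {t₀}ᶜ :=
      nhdsWithin_mono t₀ (fun s hs => ne_of_lt hs.2)
    have hslope' : Tendsto (slope f t₀) (nhdsWithin t₀ (Ioo (0:ℝ) t₀)) (nhds (deriv f t₀)) :=
      hslope.mono_left hmono
    have hpow : Tendsto (fun b => -((t₀ - b) ^ (1 - α))) (nhdsWithin t₀ (Ioo (0:ℝ) t₀)) (nhds 0) := by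
      have hc : ContinuousAt (fun y : ℝ => y ^ (1 - α)) 0 :=
        Real.continuousAt_rpow_const 0 (1 - α) (Or.inr (by linarith))
      have hsub : Tendsto (fun b : ℝ => t₀ - b) (nhdsWithin t₀ (Ioo (0:ℝ) t₀)) (nhds 0) := by
        have : Tendsto (fun b : ℝ => t₀ - b) (nhds t₀) (nhds (t₀ - t₀)) :=
          (continuous_const.sub continuous_id).tendsto t₀
        rw [sub_self] at this
        exact this.mono_left nhdsWithin_le_nhds
      have := (hc.tendsto.comp hsub).neg
      rw [Real.zero_rpow (by linarith : (1:ℝ) - α ≠ 0), neg_zero] at this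
      exact this
    have hprod := hslope'.mul hpow
    rw [mul_zero] at hprod
    apply hprod.congr'
    filter_upwards [self_mem_nhdsWithin] with b hb
    have htb : 0 < t₀ - b := by linarith [hb.2]
    have hbne : b - t₀ ≠ 0 := by linarith [hb.2]
    simp only [hh, slope_def_field, div_eq_iff, hbne]
    rw [div_mul_eq_mul_div, div_eq_iff (by linarith [hb.2] : b - t₀ ≠ 0)]
    have hr : (t₀ - b) ^ (1 - α) = (t₀ - b) * (t₀ - b) ^ (-α) := by
      rw [show (1:ℝ) - α = 1 + (-α) by ring, Real.rpow_add htb, Real.rpow_one]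
    rw [hr]
    ring
  exact le_of_tendsto_of_tendsto hht hFt (eventually_nhdsWithin_of_forall step1)

theorem fractional_burgers_max_principle
    (α ν L T : ℝ) (hα : 0 < α ∧ α < 1) (hν : 0 < ν) (hL : 0 < L) (hT : 0 < T)
    (u : ℝ → ℝ → ℝ) (u₀ : ℝ → ℝ) (M : ℝ)
    (hcont : ContinuousOn (fun p : ℝ × ℝ => u p.1 p.2) (Icc 0 L ×ˢ Ico 0 T))
    (hx : ∀ t ∈ Ioo (0:ℝ) T, ∀ x ∈ Ioo (0:ℝ) L,
      DifferentiableAt ℝ (fun y => u y t) x ∧ DifferentiableAt ℝ (fun y => pdX u y t) x ∧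
        ContinuousAt (fun y => pdX (pdX u) y t) x)
    (ht : ∀ x ∈ Ioo (0:ℝ) L, ∀ t ∈ Ioo (0:ℝ) T,
      DifferentiableAt ℝ (fun s => u x s) t ∧ ContinuousAt (fun s => pdT u x s) t)
    (hcap : ∀ x ∈ Ioo (0:ℝ) L, ∀ t ∈ Ioo (0:ℝ) T,
      IntervalIntegrable (fun s => (t - s) ^ (-α) * deriv (fun r => u x r) s)
        MeasureTheory.volume 0 t)
    (hpde : ∀ x ∈ Ioo (0:ℝ) L, ∀ t ∈ Ioo (0:ℝ) T,
      capT α u x t + u x t * pdX u x t = ν * pdX (pdX u) x t)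
    (hinit : ∀ x ∈ Icc (0:ℝ) L, u x 0 = u₀ x)
    (hM : M = sSup ((fun s => u 0 s) '' Ico (0:ℝ) T ∪ (fun s => u L s) '' Ico (0:ℝ) T ∪ u₀ '' Icc (0:ℝ) L))
    (hbdd : BddAbove ((fun s => u 0 s) '' Ico (0:ℝ) T ∪ (fun s => u L s) '' Ico (0:ℝ) T ∪ u₀ '' Icc (0:ℝ) L)) :
    ∀ x ∈ Icc (0:ℝ) L, ∀ t ∈ Ico (0:ℝ) T, u x t ≤ M := by
  obtain ⟨hα0, hα1⟩ := hα
  intro a ha b hb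
  by_contra hgt
  push_neg at hgt
  -- boundary and initial bounds
  have hbound0 : ∀ s ∈ Ico (0:ℝ) T, u 0 s ≤ M := fun s hs => by
    rw [hM]; exact le_csSup hbdd (Or.inl (Or.inl ⟨s, hs, rfl⟩))
  have hboundL : ∀ s ∈ Ico (0:ℝ) T, u L s ≤ M := fun s hs => by
    rw [hM]; exact le_csSup hbdd (Or.inl (Or.inr ⟨s, hs, rfl⟩))
  have hbound1 : ∀ x ∈ Icc (0:ℝ) L, u x 0 ≤ M := fun x hx' => by
    rw [hinit x hx', hM]; exact le_csSup hbdd (Or.inr ⟨x, hx', rfl⟩)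
  -- set up the perturbed function and its maximum
  set T' : ℝ := (b + T) / 2 with hT'def
  have hT'pos : 0 < T' := by simp only [hT'def]; linarith [hb.1]
  have hT'T : T' < T := by simp only [hT'def]; linarith [hb.2]
  have hbT' : b ≤ T' := by simp only [hT'def]; linarith [hb.2]
  set ε : ℝ := (u a b - M) / (2 * T') with hεdef
  have hεpos : 0 < ε := div_pos (by linarith) (by linarith)
  have hεT' : ε * T' = (u a b - M) / 2 := by
    field_simp [hεdef]
    rw [hεdef]; field_simp
  set w : ℝ × ℝ → ℝ := fun p => u p.1 p.2 - ε * p.2 with hwdef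
  set R : Set (ℝ × ℝ) := Icc (0:ℝ) L ×ˢ Icc (0:ℝ) T' with hRdef
  have hRsub : R ⊆ Icc 0 L ×ˢ Ico 0 T := by
    apply Set.prod_mono_right
    exact Icc_subset_Ico_right hT'T
  have hwc : ContinuousOn w R :=
    (hcont.mono hRsub).sub ((continuous_const.mul continuous_snd).continuousOn)
  have hRcomp : IsCompact R := isCompact_Icc.prod isCompact_Icc
  have hRne : R.Nonempty := ⟨(0, 0), by
    constructor
    · exact left_mem_Icc.2 hL.le
    · exact left_mem_Icc.2 hT'pos.le⟩
  obtain ⟨⟨x₀, t₀⟩, hmem, hmax⟩ := hRcomp.exists_isMaxOn hRne hwc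
  rw [mem_prod] at hmem
  obtain ⟨hx₀I, ht₀I⟩ := hmem
  replace hx₀I : x₀ ∈ Icc (0:ℝ) L := hx₀I
  replace ht₀I : t₀ ∈ Icc (0:ℝ) T' := ht₀I
  have hmax' : ∀ q ∈ R, w q ≤ w (x₀, t₀) := hmax
  -- the max value exceeds M
  have hwab : M < w (a, b) := by
    have h1 : ε * b ≤ ε * T' := by
      apply mul_le_mul_of_nonneg_left hbT' hεpos.le
    have h2 : w (a, b) = u a b - ε * b := rfl
    rw [hεT'] at h1
    rw [h2]
    linarith
  have habR : (a, b) ∈ R := ⟨ha, ⟨hb.1, hbT'⟩⟩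
  have hwmax : M < w (x₀, t₀) := lt_of_lt_of_le hwab (hmax' _ habR)
  -- t₀ > 0
  have ht₀pos : 0 < t₀ := by
    rcases lt_or_eq_of_le ht₀I.1 with h | h
    · exact h
    · exfalso
      have h2 := hbound1 x₀ hx₀I
      have h3 : w (x₀, t₀) = u x₀ 0 := by
        simp only [hwdef, ← h]
        simp
      linarith [hwmax, h3 ▸ hwmax]
  have ht₀T : t₀ < T := lt_of_le_of_lt ht₀I.2 hT'T
  have ht₀mem : t₀ ∈ Ioo (0:ℝ) T := ⟨ht₀pos, ht₀T⟩
  have ht₀Ico : t₀ ∈ Ico (0:ℝ) T := ⟨ht₀I.1, ht₀T⟩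
  -- x₀ interior
  have hεt₀ : 0 ≤ ε * t₀ := mul_nonneg hεpos.le ht₀I.1
  have hx₀mem : x₀ ∈ Ioo (0:ℝ) L := by
    constructor
    · rcases lt_or_eq_of_le hx₀I.1 with h | h
      · exact h
      · exfalso
        have h2 := hbound0 t₀ ht₀Ico
        simp only [hwdef, ← h] at hwmax
        linarith
    · rcases lt_or_eq_of_le hx₀I.2 with h | h
      · exact h
      · exfalso
        have h2 := hboundL t₀ ht₀Ico
        simp only [hwdef, h] at hwmax
        linarith
  -- spatial analysis
  set g : ℝ → ℝ := fun y => u y t₀ with hgdef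
  have hgmax : ∀ y ∈ Icc (0:ℝ) L, g y ≤ g x₀ := by
    intro y hy
    have := hmax' (y, t₀) ⟨hy, ht₀I⟩
    simp only [hwdef] at this
    simpa [hgdef] using this
  have hgd : ∀ y ∈ Ioo (0:ℝ) L, DifferentiableAt ℝ g y := fun y hy => (hx t₀ ht₀mem y hy).1
  have hgd' : ∀ y ∈ Ioo (0:ℝ) L, DifferentiableAt ℝ (deriv g) y := by
    intro y hy
    have := (hx t₀ ht₀mem y hy).2.1
    simpa [pdX, hgdef] using this
  have hgc : ContinuousAt (deriv (deriv g)) x₀ := by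
    have := (hx t₀ ht₀mem x₀ hx₀mem).2.2
    simpa [pdX, hgdef] using this
  have hd2 : deriv (deriv g) x₀ ≤ 0 :=
    second_deriv_nonpos_at_max hgd hgd' hgc hgmax hx₀mem
  have hd1 : deriv g x₀ = 0 := by
    have hloc : IsLocalMax g x₀ := by
      have h1 : Icc (0:ℝ) L ∈ nhds x₀ := Icc_mem_nhds hx₀mem.1 hx₀mem.2
      exact Filter.eventually_of_mem h1 (fun y hy => hgmax y hy)
    exact hloc.deriv_eq_zero
  have hpdX1 : pdX u x₀ t₀ = 0 := hd1
  have hpdX2 : pdX (pdX u) x₀ t₀ ≤ 0 := by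
    have : pdX (pdX u) x₀ t₀ = deriv (deriv g) x₀ := by
      simp only [pdX, hgdef]
    rw [this]; exact hd2
  -- temporal analysis
  set f : ℝ → ℝ := fun s => u x₀ s - ε * s with hfdef
  have hder : ∀ s ∈ Ioo (0:ℝ) T, deriv f s = deriv (fun r => u x₀ r) s - ε := by
    intro s hs
    have h1 : DifferentiableAt ℝ (fun r => u x₀ r) s := (ht x₀ hx₀mem s hs).1
    have h2 : DifferentiableAt ℝ (fun r : ℝ => ε * r) s := by fun_prop
    simp only [hfdef]
    rw [deriv_fun_sub h1 h2, deriv_const_mul _ differentiableAt_fun_id]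
    simp
  have hfd : ∀ s ∈ Ioc (0:ℝ) t₀, DifferentiableAt ℝ f s := by
    intro s hs
    have h1 : DifferentiableAt ℝ (fun r => u x₀ r) s :=
      (ht x₀ hx₀mem s ⟨hs.1, lt_of_le_of_lt hs.2 ht₀T⟩).1
    apply DifferentiableAt.sub h1
    fun_prop
  have hfd' : ContinuousOn (deriv f) (Ioo 0 t₀) := by
    have hsub : Ioo (0:ℝ) t₀ ⊆ Ioo 0 T := Ioo_subset_Ioo le_rfl ht₀T.le
    apply ContinuousOn.congr (f := fun s => pdT u x₀ s - ε)
    · apply ContinuousOn.sub _ continuousOn_const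
      intro s hs
      exact ((ht x₀ hx₀mem s (hsub hs)).2).continuousWithinAt
    · intro s hs
      rw [hder s (hsub hs)]
      rfl
  -- integrability
  have hrpow : IntervalIntegrable (fun s : ℝ => (t₀ - s) ^ (-α)) volume 0 t₀ := by
    have h1 : IntervalIntegrable (fun s : ℝ => s ^ (-α)) volume 0 t₀ :=
      intervalIntegral.intervalIntegrable_rpow' (by linarith)
    have h2 := h1.comp_sub_left t₀
    simpa using h2.symm
  have hint : IntervalIntegrable (fun s => (t₀ - s) ^ (-α) * deriv f s) volume 0 t₀ := by
    have h1 := hcap x₀ hx₀mem t₀ ht₀mem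
    have h2 : IntervalIntegrable
        (fun s => (t₀ - s) ^ (-α) * deriv (fun r => u x₀ r) s - (t₀ - s) ^ (-α) * ε)
        volume 0 t₀ := h1.sub (hrpow.mul_const ε)
    rw [intervalIntegrable_iff] at h2 ⊢
    apply h2.congr_fun _ measurableSet_uIoc
    intro s hs
    rw [uIoc_of_le ht₀I.1] at hs
    have hsIoo : s ∈ Ioo (0:ℝ) T := ⟨hs.1, lt_of_le_of_lt hs.2 ht₀T⟩
    simp only [hder s hsIoo]
    ring
  have hmaxf : ∀ s ∈ Icc (0:ℝ) t₀, f s ≤ f t₀ := by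
    intro s hs
    have := hmax' (x₀, s) ⟨hx₀I, ⟨hs.1, le_trans hs.2 ht₀I.2⟩⟩
    simpa [hwdef, hfdef] using this
  have hkey := caputo_nonneg_at_max hα0 hα1 ht₀pos hfd hfd' hint hmaxf
  -- relate to the Caputo derivative of u
  have heq : (∫ s in (0:ℝ)..t₀, (t₀ - s) ^ (-α) * deriv f s)
      = (∫ s in (0:ℝ)..t₀, (t₀ - s) ^ (-α) * deriv (fun r => u x₀ r) s)
        - ∫ s in (0:ℝ)..t₀, (t₀ - s) ^ (-α) * ε := by
    rw [← intervalIntegral.integral_sub (hcap x₀ hx₀mem t₀ ht₀mem) (hrpow.mul_const ε)]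
    apply intervalIntegral.integral_congr_ae
    apply MeasureTheory.ae_of_all
    intro s hs
    rw [uIoc_of_le ht₀I.1] at hs
    have hsIoo : s ∈ Ioo (0:ℝ) T := ⟨hs.1, lt_of_le_of_lt hs.2 ht₀T⟩
    rw [hder s hsIoo]
    ring
  have hcpos : 0 < ∫ s in (0:ℝ)..t₀, (t₀ - s) ^ (-α) * ε := by
    apply intervalIntegral.intervalIntegral_pos_of_pos_on (hrpow.mul_const ε)
    · intro s hs
      apply mul_pos _ hεpos
      apply Real.rpow_pos_of_pos
      linarith [hs.2]
    · exact ht₀pos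
  have hintpos : 0 < ∫ s in (0:ℝ)..t₀, (t₀ - s) ^ (-α) * deriv (fun r => u x₀ r) s := by
    rw [heq] at hkey
    linarith
  have hcapPos : 0 < capT α u x₀ t₀ := by
    unfold capT caputo
    apply mul_pos
    · apply div_pos one_pos
      exact Real.Gamma_pos_of_pos (by linarith)
    · exact hintpos
  -- conclude via the PDE
  have hpde' := hpde x₀ hx₀mem t₀ ht₀mem
  rw [hpdX1, mul_zero, add_zero] at hpde'
  have : ν * pdX (pdX u) x₀ t₀ ≤ 0 := mul_nonpos_of_nonneg_of_nonpos hν.le hpdX2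
  linarith
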